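/- Let α, β, μ ∈ ℂ with |β| < |α| and |μ| < 1, and let M be the 2×2 real matrix of the ℝ-linear map ℝ² → ℝ² given in complex notation by ζ ↦ α·ζ + conj(β)·conj(ζ) (identifying (v₁, v₂) ∈ ℝ² with ζ = v₁ + i·v₂). Then det M = |α|² − |β|² and E(T(μ)) = (|α|² − |β|²)⁻¹ · Mᵀ · E(μ) · M. That is, the μ-parametrization intertwines the Möbius transformation of μ with the tensor-density transformation law e′_{cd} = (∂θᵃ/∂θ′ᶜ)(∂θᵇ/∂θ′ᵈ)·|det(∂θ′/∂θ)|·e_{ab} of the conformal 2-metric under a linear change of the transverse coordinates. -/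

import Mathlib

set_option maxHeartbeats 1000000


/-- The conformal 2-metric parametrized by a complex number `μ` with `|μ| < 1`:
`E(μ) = (1 − |μ|²)⁻¹ · [[|1 + μ|², 2·Im μ], [2·Im μ, |1 − μ|²]]`. -/
noncomputable def conformalMetric (μ : ℂ) : Matrix (Fin 2) (Fin 2) ℝ :=
  (1 - ‖μ‖ ^ 2)⁻¹ •
    !![‖1 + μ‖ ^ 2, 2 * μ.im; 2 * μ.im, ‖1 - μ‖ ^ 2]

/-- The Möbius-type transformation of the conformal 2-metric parameter `μ` induced by
the change of transverse complex coordinate `z = α·z′ + conj(β)·conj(z′)`: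
`T(μ) = (conj β + μ·conj α)/(α + μ·β)`. -/
noncomputable def mobiusT (α β μ : ℂ) : ℂ :=
  ((starRingEnd ℂ) β + μ * (starRingEnd ℂ) α) / (α + μ * β)

/-- If `M` is the real 2×2 matrix of the ℝ-linear map `ζ ↦ α·ζ + conj(β)·conj(ζ)`
(identifying `(v₁, v₂) ∈ ℝ²` with `ζ = v₁ + i·v₂`), where `|β| < |α|`, then
`det M = |α|² − |β|²` and `E(T(μ)) = (|α|² − |β|²)⁻¹ · Mᵀ · E(μ) · M` for every `μ`
in the open unit disc: the `μ`-parametrization intertwines the Möbius transformation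
with the tensor-density transformation law of the conformal 2-metric. -/
theorem conformalMetric_transformation (α β μ : ℂ)
    (hβα : ‖β‖ < ‖α‖) (hμ : ‖μ‖ < 1)
    (M : Matrix (Fin 2) (Fin 2) ℝ)
    (hM : ∀ v : Fin 2 → ℝ,
      ((M.mulVec v 0 : ℝ) : ℂ) + ((M.mulVec v 1 : ℝ) : ℂ) * Complex.I =
        α * ((v 0 : ℂ) + (v 1 : ℂ) * Complex.I) +
          (starRingEnd ℂ) β * (starRingEnd ℂ) ((v 0 : ℂ) + (v 1 : ℂ) * Complex.I)) :
    M.det = ‖α‖ ^ 2 - ‖β‖ ^ 2 ∧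
      conformalMetric (mobiusT α β μ) =
        (‖α‖ ^ 2 - ‖β‖ ^ 2)⁻¹ • (M.transpose * conformalMetric μ * M) := by
  have h0 := hM ![1, 0]
  have h1 := hM ![0, 1]
  simp [Matrix.mulVec, dotProduct, Matrix.vecHead, Matrix.vecTail, Fin.sum_univ_two, Complex.ext_iff] at h0 h1
  obtain ⟨e00, e10⟩ := h0
  obtain ⟨e01, e11⟩ := h1
  have hMeq : M = !![α.re + β.re, -α.im + -β.im; α.im + -β.im, α.re + -β.re] := by
    rw [Matrix.eta_fin_two M, e00, e01, e10, e11]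
  -- nonvanishing facts
  have hβ0 : (0:ℝ) ≤ ‖β‖ := norm_nonneg β
  have hμ0 : (0:ℝ) ≤ ‖μ‖ := norm_nonneg μ
  have hαβ : ‖β‖ ^ 2 < ‖α‖ ^ 2 := by nlinarith
  have hαβ' : ‖α‖ ^ 2 - ‖β‖ ^ 2 ≠ 0 := by nlinarith
  have h1μ : (0:ℝ) < 1 - ‖μ‖ ^ 2 := by nlinarith
  have h1μ' : 1 - ‖μ‖ ^ 2 ≠ 0 := ne_of_gt h1μ
  have hD : α + μ * β ≠ 0 := by
    intro h
    have h2 : ‖α‖ = ‖μ‖ * ‖β‖ := by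
      have h3 : α = -(μ * β) := by linear_combination h
      rw [h3, norm_neg, norm_mul]
    nlinarith
  have hnD : Complex.normSq (α + μ * β) ≠ 0 := by
    simpa [Complex.normSq_eq_zero] using hD
  have hnD' : (0:ℝ) < Complex.normSq (α + μ * β) :=
    lt_of_le_of_ne (Complex.normSq_nonneg _) (Ne.symm hnD)
  set ν := mobiusT α β μ with hνdef
  have hA : 1 - ‖ν‖ ^ 2 =
      ((‖α‖ ^ 2 - ‖β‖ ^ 2) * (1 - ‖μ‖ ^ 2)) /
        Complex.normSq (α + μ * β) := by
    rw [hνdef, mobiusT, norm_div, div_pow, Complex.sq_norm, Complex.sq_norm,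
      Complex.sq_norm α, Complex.sq_norm β, Complex.sq_norm μ]
    field_simp
    simp only [Complex.normSq_apply, Complex.add_re, Complex.add_im, Complex.mul_re,
      Complex.mul_im, Complex.conj_re, Complex.conj_im]
    ring
  have hB : ‖1 + ν‖ ^ 2 =
      Complex.normSq ((α + (starRingEnd ℂ) β) + μ * (β + (starRingEnd ℂ) α)) /
        Complex.normSq (α + μ * β) := by
    have h : 1 + ν = ((α + (starRingEnd ℂ) β) + μ * (β + (starRingEnd ℂ) α)) / (α + μ * β) := by
      rw [hνdef, mobiusT]
      field_simp
      ring
    rw [h, norm_div, div_pow, Complex.sq_norm, Complex.sq_norm]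
  have hC : ‖1 - ν‖ ^ 2 =
      Complex.normSq ((α - (starRingEnd ℂ) β) + μ * (β - (starRingEnd ℂ) α)) /
        Complex.normSq (α + μ * β) := by
    have h : 1 - ν = ((α - (starRingEnd ℂ) β) + μ * (β - (starRingEnd ℂ) α)) / (α + μ * β) := by
      rw [hνdef, mobiusT]
      field_simp
      ring
    rw [h, norm_div, div_pow, Complex.sq_norm, Complex.sq_norm]
  have hIm : ν.im = (((starRingEnd ℂ) β + μ * (starRingEnd ℂ) α) *
      (starRingEnd ℂ) (α + μ * β)).im / Complex.normSq (α + μ * β) := by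
    rw [hνdef, mobiusT, Complex.div_im]
    simp only [Complex.mul_im, Complex.conj_re, Complex.conj_im]
    ring
  constructor
  · rw [hMeq, Matrix.det_fin_two_of, Complex.sq_norm α, Complex.sq_norm β,
      Complex.normSq_apply, Complex.normSq_apply]
    ring
  · have hE : 1 - ‖ν‖ ^ 2 ≠ 0 := by
      rw [hA]; positivity
    rw [hMeq]
    rw [Complex.sq_norm α, Complex.sq_norm β] at hαβ'
    rw [Complex.sq_norm μ] at h1μ'
    ext i j
    fin_cases i <;> fin_cases j <;>
      · simp only [conformalMetric, Matrix.smul_apply, Matrix.mul_apply, Matrix.transpose_apply,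
          Fin.sum_univ_two, Fin.zero_eta, Fin.mk_one, Matrix.cons_val', Matrix.cons_val_zero,
          Matrix.cons_val_one, Matrix.head_cons, Matrix.head_fin_const, Matrix.of_apply,
          Matrix.empty_val', Matrix.cons_val_fin_one, smul_eq_mul, Fin.isValue]
        rw [hA]
        first
          | rw [hB]
          | rw [hC]
          | rw [hIm]
        rw [Complex.sq_norm μ, Complex.sq_norm α, Complex.sq_norm β,
          Complex.sq_norm (1 + μ), Complex.sq_norm (1 - μ)]
        field_simp [hαβ', h1μ', hnD]
        simp only [Complex.normSq_apply, Complex.add_re, Complex.add_im, Complex.sub_re,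
          Complex.sub_im, Complex.mul_re, Complex.mul_im, Complex.conj_re, Complex.conj_im,
          Complex.one_re, Complex.one_im]
        ring
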